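/- For every sequential decision strategy δ = (τ,d), the Bayes risk R(δ) = c E[(τ-θ)⁺] + E[a_{0d} 1{τ<θ} + a_{μd} 1{θ≤τ<∞}] can be expressed as R(δ) = E[ Σ_{n=0}^{τ-1} c(1-Π_n^{(0)}) + 1{τ<∞} Σ_{j=1}^M 1{d=j} Σ_{i=0}^M a_{ij} Π_τ^{(i)} ]. -/

import Mathlib

open MeasureTheory
open scoped ENNReal NNReal

private lemma lintegral_ofReal_condexp_set_eq
    {Ω : Type*} {m : MeasurableSpace Ω} {mΩ : MeasurableSpace Ω} (hm : m ≤ mΩ)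
    {P : Measure Ω} [IsProbabilityMeasure P] {f h : Ω → ℝ}
    (hf : Integrable f P) (hf0 : 0 ≤ᵐ[P] f) (hh : h =ᵐ[P] P[f|m])
    {A : Set Ω} (hA : MeasurableSet[m] A) :
    ∫⁻ ω in A, ENNReal.ofReal (h ω) ∂P = ∫⁻ ω in A, ENNReal.ofReal (f ω) ∂P := by
  haveI : IsFiniteMeasure (P.trim hm) := isFiniteMeasure_trim hm
  have hce0 : 0 ≤ᵐ[P] P[f|m] := condExp_nonneg hf0
  calc ∫⁻ ω in A, ENNReal.ofReal (h ω) ∂P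
      = ∫⁻ ω in A, ENNReal.ofReal ((P[f|m]) ω) ∂P :=
        lintegral_congr_ae (ae_restrict_of_ae (hh.mono fun ω hω => by simp only [hω]))
    _ = ENNReal.ofReal (∫ ω in A, (P[f|m]) ω ∂P) :=
        (ofReal_integral_eq_lintegral_ofReal integrable_condExp.restrict
          (ae_restrict_of_ae hce0)).symm
    _ = ENNReal.ofReal (∫ ω in A, f ω ∂P) := by rw [setIntegral_condExp hm hf hA]
    _ = ∫⁻ ω in A, ENNReal.ofReal (f ω) ∂P :=
        ofReal_integral_eq_lintegral_ofReal hf.restrict (ae_restrict_of_ae hf0)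

private lemma enat_sub_toENNReal_eq_tsum (t : ℕ∞) (k : ℕ) :
    ((t - (k:ℕ∞) : ℕ∞) : ℝ≥0∞) = ∑' n : ℕ, if (n:ℕ∞) < t ∧ k ≤ n then (1:ℝ≥0∞) else 0 := by
  classical
  induction t using ENat.recTopCoe with
  | top =>
      simp only [ENat.top_sub_coe, ENat.toENNReal_top, ENat.coe_lt_top, true_and]
      symm
      refine ENNReal.eq_top_of_forall_nnreal_le fun r => ?_
      have key : ∀ N : ℕ, (N : ℝ≥0∞) ≤ ∑' n : ℕ, if k ≤ n then (1:ℝ≥0∞) else 0 := by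
        intro N
        have h1 : ((N:ℝ≥0∞)) = ∑ n ∈ Finset.Ico k (k+N), (if k ≤ n then (1:ℝ≥0∞) else 0) := by
          rw [Finset.sum_congr rfl fun n hn => if_pos (Finset.mem_Ico.mp hn).1,
            Finset.sum_const, Nat.card_Ico]
          simp
        rw [h1]; exact ENNReal.sum_le_tsum _
      calc (r:ℝ≥0∞) ≤ (⌈(r:ℝ≥0)⌉₊ : ℝ≥0∞) := by
            exact_mod_cast ENNReal.coe_le_coe.mpr (Nat.le_ceil r)
        _ ≤ _ := key _
  | coe m =>
      have hsupp : ∀ n ∉ Finset.range m,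
          (if (n:ℕ∞) < (m:ℕ∞) ∧ k ≤ n then (1:ℝ≥0∞) else 0) = 0 := by
        intro n hn
        rw [if_neg]
        rintro ⟨h1, -⟩
        exact hn (Finset.mem_range.mpr (by exact_mod_cast h1))
      rw [tsum_eq_sum hsupp]
      simp only [Nat.cast_lt]
      rw [← Finset.sum_filter]
      have hfil : (Finset.range m).filter (fun n => n < m ∧ k ≤ n) = Finset.Ico k m := by
        ext n; simp only [Finset.mem_filter, Finset.mem_range, Finset.mem_Ico]; omega
      rw [hfil, Finset.sum_const, Nat.card_Ico]
      have h2 : (m:ℕ∞) - (k:ℕ∞) = ((m - k : ℕ) : ℕ∞) := (ENat.coe_sub m k).symm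
      rw [h2]
      simp

/-- the Bayes risk
`R(δ) = c E[(τ-θ)⁺] + E[a_{0d} 1{τ<θ} + a_{μd} 1{θ≤τ<∞}]` equals
`E[Σ_{n<τ} c(1-Π_n^{(0)}) + 1{τ<∞} Σ_j 1{d=j} Σ_i a_{ij} Π_τ^{(i)}]`. -/
theorem bayes_risk_in_terms_of_posterior
    {Ω : Type*} {mΩ : MeasurableSpace Ω} (P : Measure Ω) [IsProbabilityMeasure P]
    (𝓕 : Filtration ℕ mΩ) {M : ℕ} (hM : 0 < M)
    (θ : Ω → ℕ) (hθ : Measurable θ)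
    (μidx : Ω → Fin (M + 1)) (hμmeas : Measurable μidx) (hμ : ∀ ω, μidx ω ≠ 0)
    (c : ℝ) (hc : 0 < c)
    (a : Fin (M + 1) → Fin (M + 1) → ℝ)
    (ha : ∀ i j, 0 ≤ a i j) (haii : ∀ i : Fin (M + 1), i ≠ 0 → a i i = 0)
    -- the posterior processes
    (Pi : ℕ → Fin (M + 1) → Ω → ℝ)
    (hPi0 : ∀ n : ℕ,
      Pi n 0 =ᵐ[P] P[({ω | n < θ ω}).indicator (fun _ => (1 : ℝ)) | 𝓕 n])
    (hPii : ∀ (n : ℕ) (i : Fin (M + 1)), i ≠ 0 →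
      Pi n i =ᵐ[P]
        P[({ω | θ ω ≤ n ∧ μidx ω = i}).indicator (fun _ => (1 : ℝ)) | 𝓕 n])
    -- τ is a (possibly infinite) stopping time of 𝓕 and d is 𝓕_τ-measurable
    (τ : Ω → ℕ∞) (d : Ω → Fin (M + 1)) (hd : ∀ ω, d ω ≠ 0)
    (hτ : ∀ n : ℕ, MeasurableSet[𝓕 n] {ω | τ ω ≤ (n : ℕ∞)})
    (hdmeas : ∀ (n : ℕ) (j : Fin (M + 1)),
      MeasurableSet[𝓕 n] {ω | τ ω = (n : ℕ∞) ∧ d ω = j}) :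
    ENNReal.ofReal c * ∫⁻ ω, ((τ ω - (θ ω : ℕ∞)) : ℕ∞) ∂P
      + ∫⁻ ω,
          ((if τ ω < (θ ω : ℕ∞) then ENNReal.ofReal (a 0 (d ω)) else 0)
            + if (θ ω : ℕ∞) ≤ τ ω ∧ τ ω < ⊤ then ENNReal.ofReal (a (μidx ω) (d ω))
              else 0) ∂P
    = ∫⁻ ω,
        ((∑' n : ℕ, if (n : ℕ∞) < τ ω then ENNReal.ofReal (c * (1 - Pi n 0 ω)) else 0)
          + if τ ω < ⊤ then
              ∑ j ∈ Finset.univ.filter (fun j : Fin (M + 1) => j ≠ 0),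
                (if d ω = j then
                  ENNReal.ofReal (∑ i : Fin (M + 1), a i j * Pi (τ ω).toNat i ω)
                 else 0)
            else 0) ∂P := by
  classical
  -- basic objects
  set S : Finset (Fin (M + 1)) := Finset.univ.filter (fun j : Fin (M + 1) => j ≠ 0) with hS
  set g0 : ℕ → Ω → ℝ := fun n => ({ω | n < θ ω}).indicator (fun _ => (1:ℝ)) with hg0
  set gi : ℕ → Fin (M + 1) → Ω → ℝ :=
    fun n i => ({ω | θ ω ≤ n ∧ μidx ω = i}).indicator (fun _ => (1:ℝ)) with hgi
  set A : ℕ → Set Ω := fun n => {ω | (n:ℕ∞) < τ ω} with hA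
  set B : ℕ → Fin (M + 1) → Set Ω := fun n j => {ω | τ ω = (n:ℕ∞) ∧ d ω = j} with hB
  set f1 : ℕ → Ω → ℝ := fun n => ({ω | θ ω ≤ n}).indicator (fun _ => c) with hf1
  set F : ℕ → Fin (M + 1) → Ω → ℝ :=
    fun n j ω => a 0 j * g0 n ω + ∑ i ∈ S, a i j * gi n i ω with hF
  set G : ℕ → Fin (M + 1) → Ω → ℝ :=
    fun n j ω => ∑ i : Fin (M + 1), a i j * Pi n i ω with hG
  -- measurability of the basic sets
  have hθset : ∀ n : ℕ, MeasurableSet {ω | n < θ ω} := fun n =>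
    hθ measurableSet_Ioi
  have hθset' : ∀ n : ℕ, MeasurableSet {ω | θ ω ≤ n} := fun n =>
    hθ measurableSet_Iic
  have hgiset : ∀ (n : ℕ) (i : Fin (M+1)), MeasurableSet {ω | θ ω ≤ n ∧ μidx ω = i} := by
    intro n i
    have : {ω | θ ω ≤ n ∧ μidx ω = i} = {ω | θ ω ≤ n} ∩ μidx ⁻¹' {i} := rfl
    rw [this]
    exact (hθset' n).inter (hμmeas (measurableSet_singleton i))
  have hAm : ∀ n : ℕ, MeasurableSet[𝓕 n] (A n) := by
    intro n
    have : A n = {ω | τ ω ≤ (n:ℕ∞)}ᶜ := by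
      ext ω; simp [hA, not_le]
    rw [this]
    exact (hτ n).compl
  have hAΩ : ∀ n : ℕ, MeasurableSet (A n) := fun n => 𝓕.le n _ (hAm n)
  have hBm : ∀ (n : ℕ) (j : Fin (M+1)), MeasurableSet[𝓕 n] (B n j) := fun n j => hdmeas n j
  have hBΩ : ∀ (n : ℕ) (j : Fin (M+1)), MeasurableSet (B n j) := fun n j =>
    𝓕.le n _ (hBm n j)
  -- integrability
  have hg0int : ∀ n : ℕ, Integrable (g0 n) P := fun n =>
    (integrable_const (1:ℝ)).indicator (hθset n)
  have hgiint : ∀ (n : ℕ) (i : Fin (M+1)), Integrable (gi n i) P := fun n i =>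
    (integrable_const (1:ℝ)).indicator (hgiset n i)
  have hf1int : ∀ n : ℕ, Integrable (f1 n) P := fun n =>
    (integrable_const c).indicator (hθset' n)
  have hFint : ∀ (n : ℕ) (j : Fin (M+1)), Integrable (F n j) P := by
    intro n j
    refine Integrable.add ((hg0int n).const_mul _) ?_
    exact integrable_finset_sum S fun i _ => (hgiint n i).const_mul _
  -- nonnegativity
  have hf1nn : ∀ n : ℕ, 0 ≤ᵐ[P] f1 n := fun n =>
    Filter.Eventually.of_forall fun ω => Set.indicator_nonneg (fun _ _ => hc.le) ω
  have hg0nn : ∀ n ω, 0 ≤ g0 n ω := fun n ω =>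
    Set.indicator_nonneg (fun _ _ => zero_le_one) ω
  have hginn : ∀ n i ω, 0 ≤ gi n i ω := fun n i ω =>
    Set.indicator_nonneg (fun _ _ => zero_le_one) ω
  have hFnn : ∀ (n : ℕ) (j : Fin (M+1)), 0 ≤ᵐ[P] F n j := by
    intro n j
    refine Filter.Eventually.of_forall fun ω => ?_
    refine add_nonneg (mul_nonneg (ha 0 j) (hg0nn n ω)) ?_
    exact Finset.sum_nonneg fun i _ => mul_nonneg (ha i j) (hginn n i ω)
  -- the conditional-expectation identities
  have claim1 : ∀ n : ℕ, (fun ω => c * (1 - Pi n 0 ω)) =ᵐ[P] P[f1 n | 𝓕 n] := by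
    intro n
    have hrw : f1 n = c • ((fun _ => (1:ℝ)) - g0 n) := by
      funext ω
      by_cases h : θ ω ≤ n
      · have h' : ¬ n < θ ω := by omega
        simp [hf1, hg0, Set.indicator_apply, h, h', _root_.Pi.sub_apply]
      · have h' : n < θ ω := by omega
        simp [hf1, hg0, Set.indicator_apply, h, h', _root_.Pi.sub_apply]
    have h3 := condExp_smul (μ := P) (m := 𝓕 n) c ((fun _ => (1:ℝ)) - g0 n)
    have h1 := condExp_sub (μ := P) (m := 𝓕 n) (integrable_const (1:ℝ)) (hg0int n)
    have h2 := condExp_const (μ := P) (𝓕.le n) (1:ℝ)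
    have h4 := hPi0 n
    rw [hrw]
    filter_upwards [h3, h1, h4] with ω e3 e1 e4
    have e2 := congrFun h2 ω
    simp only [_root_.Pi.smul_apply, _root_.Pi.sub_apply, smul_eq_mul] at e1 e3 e2 ⊢
    rw [e3, e1, e2, e4]
  have hsplit : ∀ (f : Fin (M+1) → ℝ), ∑ i : Fin (M+1), f i = f 0 + ∑ i ∈ S, f i := by
    intro f
    have huniv : (Finset.univ : Finset (Fin (M+1))) = insert 0 S := by
      ext i
      simp only [Finset.mem_univ, Finset.mem_insert, hS, Finset.mem_filter, true_and, true_iff]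
      tauto
    rw [huniv, Finset.sum_insert (by simp [hS])]
  have claim2 : ∀ (n : ℕ) (j : Fin (M+1)), G n j =ᵐ[P] P[F n j | 𝓕 n] := by
    intro n j
    have hrwF : F n j = (a 0 j • g0 n) + ∑ i ∈ S, (a i j • gi n i) := by
      funext ω
      simp [hF, Finset.sum_apply, _root_.Pi.add_apply, _root_.Pi.smul_apply, smul_eq_mul]
    have hint0 : Integrable (a 0 j • g0 n) P := Integrable.smul (a 0 j) (hg0int n)
    have hintS : Integrable (∑ i ∈ S, (a i j • gi n i)) P := by
      have : (∑ i ∈ S, (a i j • gi n i)) = fun ω => ∑ i ∈ S, (a i j • gi n i) ω := by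
        funext ω; simp [Finset.sum_apply]
      rw [this]
      exact integrable_finset_sum S fun i _ => Integrable.smul (a i j) (hgiint n i)
    have hadd := condExp_add (μ := P) (m := 𝓕 n) hint0 hintS
    have hsm0 := condExp_smul (μ := P) (m := 𝓕 n) (a 0 j) (g0 n)
    have hsum := condExp_finset_sum (μ := P) (m := 𝓕 n) (s := S)
      (f := fun i => a i j • gi n i) (fun i _ => Integrable.smul (a i j) (hgiint n i))
    have hall : ∀ᵐ ω ∂P, ∀ i : Fin (M+1), i ≠ 0 →
        a i j * Pi n i ω = (P[a i j • gi n i|𝓕 n]) ω := by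
      rw [ae_all_iff]
      intro i
      by_cases hi : i = 0
      · exact Filter.Eventually.of_forall fun ω h => absurd hi h
      · have hcs := condExp_smul (μ := P) (m := 𝓕 n) (a i j) (gi n i)
        filter_upwards [hcs, hPii n i hi] with ω e1 e2
        intro _
        simp only [_root_.Pi.smul_apply, smul_eq_mul] at e1
        rw [e2, e1]
    have h0' := hPi0 n
    rw [hrwF]
    filter_upwards [hadd, hsm0, hsum, hall, h0'] with ω eadd esm0 esum eall e0
    show (∑ i : Fin (M+1), a i j * Pi n i ω) = _
    rw [hsplit, eadd]
    simp only [_root_.Pi.add_apply]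
    congr 1
    · rw [e0, esm0]; simp [smul_eq_mul, hg0]
    · rw [esum]
      simp only [Finset.sum_apply]
      exact Finset.sum_congr rfl fun i hi =>
        eall i (by simpa [hS] using hi)
  -- a.e.-measurability of the posteriors
  have hPiae : ∀ (n : ℕ) (i : Fin (M+1)), AEMeasurable (Pi n i) P := by
    intro n i
    by_cases hi : i = 0
    · subst hi
      exact ((stronglyMeasurable_condExp.mono (𝓕.le n)).measurable.aemeasurable).congr
        (hPi0 n).symm
    · exact ((stronglyMeasurable_condExp.mono (𝓕.le n)).measurable.aemeasurable).congr
        (hPii n i hi).symm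
  -- measurability of F and G
  have hg0meas : ∀ n, Measurable (g0 n) := fun n =>
    measurable_const.indicator (hθset n)
  have hgimeas : ∀ n i, Measurable (gi n i) := fun n i =>
    measurable_const.indicator (hgiset n i)
  have hFmeas : ∀ n j, Measurable (F n j) := by
    intro n j
    exact ((hg0meas n).const_mul _).add
      (Finset.measurable_sum S fun i _ => (hgimeas n i).const_mul _)
  have hGaem : ∀ n j, AEMeasurable (G n j) P := by
    intro n j
    exact Finset.aemeasurable_fun_sum Finset.univ fun i _ => (hPiae n i).const_mul _
  -- first terms
  have hL1 : ENNReal.ofReal c * ∫⁻ ω, ((τ ω - (θ ω : ℕ∞)) : ℕ∞) ∂P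
      = ∑' n : ℕ, ∫⁻ ω in A n, ENNReal.ofReal (f1 n ω) ∂P := by
    have e1 : ∫⁻ ω, ((τ ω - (θ ω:ℕ∞)):ℕ∞) ∂P
        = ∫⁻ ω, ∑' n:ℕ, (if (n:ℕ∞) < τ ω ∧ θ ω ≤ n then (1:ℝ≥0∞) else 0) ∂P :=
      lintegral_congr fun ω => enat_sub_toENNReal_eq_tsum (τ ω) (θ ω)
    have hmeas : ∀ n:ℕ,
        Measurable (fun ω => if (n:ℕ∞) < τ ω ∧ θ ω ≤ n then (1:ℝ≥0∞) else 0) := by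
      intro n
      have hset : MeasurableSet {ω | (n:ℕ∞) < τ ω ∧ θ ω ≤ n} := (hAΩ n).inter (hθset' n)
      have heq : (fun ω => if (n:ℕ∞) < τ ω ∧ θ ω ≤ n then (1:ℝ≥0∞) else 0)
          = ({ω | (n:ℕ∞) < τ ω ∧ θ ω ≤ n}).indicator (fun _ => 1) := by
        funext ω; simp [Set.indicator_apply]
      rw [heq]; exact measurable_const.indicator hset
    rw [e1, lintegral_tsum (fun n => (hmeas n).aemeasurable), ← ENNReal.tsum_mul_left]
    refine tsum_congr fun n => ?_
    rw [← lintegral_const_mul _ (hmeas n), ← lintegral_indicator (hAΩ n)]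
    refine lintegral_congr fun ω => ?_
    by_cases h1 : (n:ℕ∞) < τ ω <;> by_cases h2 : θ ω ≤ n <;>
      simp [Set.indicator_apply, hA, hf1, h1, h2]
  have hR1 : ∫⁻ ω, (∑' n:ℕ, if (n:ℕ∞) < τ ω
        then ENNReal.ofReal (c * (1 - Pi n 0 ω)) else 0) ∂P
      = ∑' n : ℕ, ∫⁻ ω in A n, ENNReal.ofReal (c * (1 - Pi n 0 ω)) ∂P := by
    have heq : ∀ n:ℕ, (fun ω => if (n:ℕ∞) < τ ω
          then ENNReal.ofReal (c * (1 - Pi n 0 ω)) else 0)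
        = (A n).indicator (fun ω => ENNReal.ofReal (c * (1 - Pi n 0 ω))) := by
      intro n; funext ω; simp [Set.indicator_apply, hA]
    have haem : ∀ n:ℕ, AEMeasurable (fun ω => if (n:ℕ∞) < τ ω
          then ENNReal.ofReal (c * (1 - Pi n 0 ω)) else 0) P := by
      intro n
      rw [heq n]
      exact (((aemeasurable_const.sub (hPiae n 0)).const_mul c).ennreal_ofReal).indicator
        (hAΩ n)
    rw [lintegral_tsum haem]
    refine tsum_congr fun n => ?_
    rw [heq n, lintegral_indicator (hAΩ n)]
  have hstep1 : ∀ n : ℕ, ∫⁻ ω in A n, ENNReal.ofReal (c * (1 - Pi n 0 ω)) ∂P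
      = ∫⁻ ω in A n, ENNReal.ofReal (f1 n ω) ∂P := fun n =>
    lintegral_ofReal_condexp_set_eq (𝓕.le n) (hf1int n) (hf1nn n) (claim1 n) (hAm n)
  -- pointwise evaluation of F
  have hFeval : ∀ (n:ℕ) (j : Fin (M+1)) (ω : Ω),
      F n j ω = if n < θ ω then a 0 j else a (μidx ω) j := by
    intro n j ω
    show a 0 j * g0 n ω + ∑ i ∈ S, a i j * gi n i ω = _
    by_cases h : n < θ ω
    · have h2 : ¬ θ ω ≤ n := by omega
      have hz : ∀ i ∈ S, a i j * gi n i ω = 0 := by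
        intro i _; simp [hgi, Set.indicator_apply, h2]
      rw [Finset.sum_eq_zero hz, add_zero, if_pos h]
      simp [hg0, Set.indicator_apply, h]
    · have h2 : θ ω ≤ n := by omega
      have hterm : ∀ i ∈ S, a i j * gi n i ω = if μidx ω = i then a i j else 0 := by
        intro i _
        by_cases hmem : μidx ω = i <;> simp [hgi, Set.indicator_apply, h2, hmem]
      rw [Finset.sum_congr rfl hterm, Finset.sum_ite_eq,
        if_pos (by simp [hS, hμ ω] : μidx ω ∈ S), if_neg h]
      simp [hg0, Set.indicator_apply, h]
  have hdS : ∀ ω, d ω ∈ S := fun ω => by simp [hS, hd ω]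
  -- pointwise decomposition of the second terms
  have hL2pt : ∀ ω : Ω,
      ((if τ ω < (θ ω:ℕ∞) then ENNReal.ofReal (a 0 (d ω)) else 0)
        + (if (θ ω:ℕ∞) ≤ τ ω ∧ τ ω < ⊤ then ENNReal.ofReal (a (μidx ω) (d ω)) else 0))
      = ∑' n:ℕ, ∑ j ∈ S, (B n j).indicator (fun ω' => ENNReal.ofReal (F n j ω')) ω := by
    intro ω
    rcases eq_or_ne (τ ω) ⊤ with htop | hne
    · have h1 : ¬ τ ω < (θ ω:ℕ∞) := by rw [htop]; exact not_top_lt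
      have h2 : ¬ ((θ ω:ℕ∞) ≤ τ ω ∧ τ ω < ⊤) := by rw [htop]; simp
      have h3 : ∀ n:ℕ, ∑ j ∈ S,
          (B n j).indicator (fun ω' => ENNReal.ofReal (F n j ω')) ω = 0 := by
        intro n
        refine Finset.sum_eq_zero fun j _ => Set.indicator_of_notMem ?_ _
        intro hmem
        have e : τ ω = (n:ℕ∞) := hmem.1
        rw [htop] at e
        exact absurd e (by simp)
      rw [tsum_congr h3, tsum_zero]
      simp [h1, h2]
    · have hcoe : ((τ ω).toNat : ℕ∞) = τ ω := ENat.coe_toNat hne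
      set n0 := (τ ω).toNat with hn0
      have htsum : (∑' n:ℕ, ∑ j ∈ S,
            (B n j).indicator (fun ω' => ENNReal.ofReal (F n j ω')) ω)
          = ∑ j ∈ S, (B n0 j).indicator (fun ω' => ENNReal.ofReal (F n0 j ω')) ω := by
        refine tsum_eq_single n0 fun n hn => ?_
        refine Finset.sum_eq_zero fun j _ => Set.indicator_of_notMem ?_ _
        intro hmem
        apply hn
        have e : τ ω = (n:ℕ∞) := hmem.1
        have : (n:ℕ∞) = (n0:ℕ∞) := by rw [← e, ← hcoe]
        exact_mod_cast this
      rw [htsum]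
      have hsum : (∑ j ∈ S, (B n0 j).indicator (fun ω' => ENNReal.ofReal (F n0 j ω')) ω)
          = ENNReal.ofReal (F n0 (d ω) ω) := by
        rw [Finset.sum_eq_single_of_mem (d ω) (hdS ω)]
        · exact Set.indicator_of_mem (Set.mem_setOf.mpr ⟨hcoe.symm, rfl⟩) _
        · intro j _ hjd
          exact Set.indicator_of_notMem (fun hmem => hjd hmem.2.symm) _
      rw [hsum, hFeval]
      by_cases hlt : n0 < θ ω
      · have h1 : τ ω < (θ ω:ℕ∞) := by rw [← hcoe]; exact_mod_cast hlt
        have h2 : ¬ ((θ ω:ℕ∞) ≤ τ ω ∧ τ ω < ⊤) := fun hh => absurd h1 (not_lt.mpr hh.1)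
        simp [h1, h2, hlt]
      · have hθle : θ ω ≤ n0 := by omega
        have h1 : ¬ τ ω < (θ ω:ℕ∞) := by
          rw [← hcoe]; exact not_lt.mpr (by exact_mod_cast hθle)
        have h2 : (θ ω:ℕ∞) ≤ τ ω ∧ τ ω < ⊤ := ⟨not_lt.1 h1, lt_top_iff_ne_top.mpr hne⟩
        simp [h1, h2, hlt]
  have hR2pt : ∀ ω : Ω,
      (if τ ω < ⊤ then ∑ j ∈ S,
          (if d ω = j then ENNReal.ofReal (∑ i : Fin (M+1), a i j * Pi (τ ω).toNat i ω)
            else 0) else 0)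
      = ∑' n:ℕ, ∑ j ∈ S, (B n j).indicator (fun ω' => ENNReal.ofReal (G n j ω')) ω := by
    intro ω
    rcases eq_or_ne (τ ω) ⊤ with htop | hne
    · have h3 : ∀ n:ℕ, ∑ j ∈ S,
          (B n j).indicator (fun ω' => ENNReal.ofReal (G n j ω')) ω = 0 := by
        intro n
        refine Finset.sum_eq_zero fun j _ => Set.indicator_of_notMem ?_ _
        intro hmem
        have e : τ ω = (n:ℕ∞) := hmem.1
        rw [htop] at e
        exact (by simp at e : False)
      rw [tsum_congr h3, tsum_zero, if_neg (by rw [htop]; exact lt_irrefl _)]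
    · have hcoe : ((τ ω).toNat : ℕ∞) = τ ω := ENat.coe_toNat hne
      set n0 := (τ ω).toNat with hn0
      have htsum : (∑' n:ℕ, ∑ j ∈ S,
            (B n j).indicator (fun ω' => ENNReal.ofReal (G n j ω')) ω)
          = ∑ j ∈ S, (B n0 j).indicator (fun ω' => ENNReal.ofReal (G n0 j ω')) ω := by
        refine tsum_eq_single n0 fun n hn => ?_
        refine Finset.sum_eq_zero fun j _ => Set.indicator_of_notMem ?_ _
        intro hmem
        apply hn
        have e : τ ω = (n:ℕ∞) := hmem.1
        have : (n:ℕ∞) = (n0:ℕ∞) := by rw [← e, ← hcoe]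
        exact_mod_cast this
      rw [htsum, if_pos (lt_top_iff_ne_top.mpr hne)]
      refine Finset.sum_congr rfl fun j hj => ?_
      by_cases hdj : d ω = j
      · rw [if_pos hdj, Set.indicator_of_mem (Set.mem_setOf.mpr ⟨hcoe.symm, hdj⟩)]
      · rw [if_neg hdj, Set.indicator_of_notMem (fun hmem => hdj hmem.2)]
  -- second terms as double sums of set-integrals
  have hL2 : ∫⁻ ω, ((if τ ω < (θ ω:ℕ∞) then ENNReal.ofReal (a 0 (d ω)) else 0)
        + (if (θ ω:ℕ∞) ≤ τ ω ∧ τ ω < ⊤ then ENNReal.ofReal (a (μidx ω) (d ω)) else 0)) ∂P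
      = ∑' n:ℕ, ∑ j ∈ S, ∫⁻ ω in B n j, ENNReal.ofReal (F n j ω) ∂P := by
    rw [lintegral_congr hL2pt]
    rw [lintegral_tsum (fun n => (Finset.aemeasurable_fun_sum S fun j _ =>
      (((hFmeas n j).ennreal_ofReal).indicator (hBΩ n j)).aemeasurable))]
    refine tsum_congr fun n => ?_
    rw [lintegral_finset_sum S fun j _ =>
      ((hFmeas n j).ennreal_ofReal).indicator (hBΩ n j)]
    exact Finset.sum_congr rfl fun j _ => lintegral_indicator (hBΩ n j) _
  have hR2 : ∫⁻ ω, (if τ ω < ⊤ then ∑ j ∈ S,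
        (if d ω = j then ENNReal.ofReal (∑ i : Fin (M+1), a i j * Pi (τ ω).toNat i ω)
          else 0) else 0) ∂P
      = ∑' n:ℕ, ∑ j ∈ S, ∫⁻ ω in B n j, ENNReal.ofReal (G n j ω) ∂P := by
    rw [lintegral_congr hR2pt]
    rw [lintegral_tsum (fun n => (Finset.aemeasurable_fun_sum S fun j _ =>
      (((hGaem n j).ennreal_ofReal).indicator (hBΩ n j))))]
    refine tsum_congr fun n => ?_
    rw [lintegral_finset_sum' S fun j _ =>
      ((hGaem n j).ennreal_ofReal).indicator (hBΩ n j)]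
    exact Finset.sum_congr rfl fun j _ => lintegral_indicator (hBΩ n j) _
  have hstep2 : ∀ (n:ℕ) (j : Fin (M+1)),
      ∫⁻ ω in B n j, ENNReal.ofReal (G n j ω) ∂P
        = ∫⁻ ω in B n j, ENNReal.ofReal (F n j ω) ∂P := fun n j =>
    lintegral_ofReal_condexp_set_eq (𝓕.le n) (hFint n j) (hFnn n j) (claim2 n j) (hBm n j)
  -- assemble
  have hsplitR : ∫⁻ ω,
        ((∑' n : ℕ, if (n : ℕ∞) < τ ω then ENNReal.ofReal (c * (1 - Pi n 0 ω)) else 0)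
          + if τ ω < ⊤ then ∑ j ∈ S,
              (if d ω = j then
                ENNReal.ofReal (∑ i : Fin (M + 1), a i j * Pi (τ ω).toNat i ω)
               else 0) else 0) ∂P
      = (∫⁻ ω, (∑' n : ℕ, if (n : ℕ∞) < τ ω
            then ENNReal.ofReal (c * (1 - Pi n 0 ω)) else 0) ∂P)
        + ∫⁻ ω, (if τ ω < ⊤ then ∑ j ∈ S,
            (if d ω = j then
              ENNReal.ofReal (∑ i : Fin (M + 1), a i j * Pi (τ ω).toNat i ω)
             else 0) else 0) ∂P := by
    refine lintegral_add_left' ?_ _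
    refine AEMeasurable.ennreal_tsum fun n => ?_
    have heq : (fun ω => if (n:ℕ∞) < τ ω
          then ENNReal.ofReal (c * (1 - Pi n 0 ω)) else 0)
        = (A n).indicator (fun ω => ENNReal.ofReal (c * (1 - Pi n 0 ω))) := by
      funext ω; simp [Set.indicator_apply, hA]
    rw [heq]
    exact (((aemeasurable_const.sub (hPiae n 0)).const_mul c).ennreal_ofReal).indicator
      (hAΩ n)
  rw [hsplitR, hR1, hR2, hL1, hL2]
  congr 1
  · exact tsum_congr fun n => (hstep1 n).symm
  · exact tsum_congr fun n => Finset.sum_congr rfl fun j _ => (hstep2 n j).symm
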